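/- For each integer K ≥ 3 let ξ_K be the unique real number satisfying Φ(ξ_K)^K = (2 log K)^{−1}. Then as K → ∞: (i) ξ_K / √(2 log K) → 1, and (ii) K·φ(ξ_K) / ( ξ_K · log log K ) → 1. -/

import Mathlib

open MeasureTheory ProbabilityTheory Filter Set Real

/-- The standard normal density. -/
noncomputable def stdNormalPDF (x : ℝ) : ℝ :=
    (Real.sqrt (2 * Real.pi))⁻¹ * Real.exp (-x ^ 2 / 2)

/-- The standard normal cumulative distribution function. -/
noncomputable def stdNormalCDF (x : ℝ) : ℝ :=
    (gaussianReal 0 1 (Set.Iic x)).toReal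

lemma pdf_eq : stdNormalPDF = gaussianPDFReal 0 1 := by
  ext x; simp [stdNormalPDF, gaussianPDFReal]

lemma pdf_pos (x : ℝ) : 0 < stdNormalPDF x := by
  rw [pdf_eq]; exact gaussianPDFReal_pos 0 1 x one_ne_zero

lemma integrable_pdf : Integrable stdNormalPDF := by
  rw [pdf_eq]; exact integrable_gaussianPDFReal 0 1

lemma cdf_eq (x : ℝ) : stdNormalCDF x = ∫ t in Iic x, stdNormalPDF t := by
  rw [stdNormalCDF, gaussianReal_apply_eq_integral 0 one_ne_zero, ENNReal.toReal_ofReal, pdf_eq]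
  exact setIntegral_nonneg measurableSet_Iic fun t _ => gaussianPDFReal_nonneg 0 1 t

lemma tail_eq (x : ℝ) : 1 - stdNormalCDF x = ∫ t in Ioi x, stdNormalPDF t := by
  have h1 : ∫ t, stdNormalPDF t = 1 := by
    rw [pdf_eq]; exact integral_gaussianPDFReal_eq_one 0 one_ne_zero
  have h2 := intervalIntegral.integral_Iic_add_Ioi (μ := volume) (b := x)
    integrable_pdf.integrableOn integrable_pdf.integrableOn
  rw [cdf_eq]; linarith [h2.trans h1]

lemma cdf_strictMono : StrictMono stdNormalCDF := by
  intro a b hab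
  have h : stdNormalCDF b - stdNormalCDF a = ∫ t in a..b, stdNormalPDF t := by
    rw [cdf_eq, cdf_eq,
      intervalIntegral.integral_Iic_sub_Iic integrable_pdf.integrableOn
        integrable_pdf.integrableOn]
  have hpos : 0 < ∫ t in a..b, stdNormalPDF t :=
    intervalIntegral.intervalIntegral_pos_of_pos integrable_pdf.intervalIntegrable pdf_pos hab
  linarith

lemma hasDerivAt_pdf (t : ℝ) : HasDerivAt stdNormalPDF (-t * stdNormalPDF t) t := by
  have h1 : HasDerivAt (fun t : ℝ => -t ^ 2 / 2) (-t) t := by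
    have := ((hasDerivAt_pow 2 t).neg).div_const 2
    refine this.congr_deriv ?_
    norm_num; ring
  have h2 := (h1.exp).const_mul (Real.sqrt (2 * Real.pi))⁻¹
  exact h2.congr_deriv (by unfold stdNormalPDF; ring)

lemma integrableOn_id_mul_pdf (x : ℝ) :
    IntegrableOn (fun t => t * stdNormalPDF t) (Ioi x) := by
  have h : Integrable (fun t : ℝ => t * stdNormalPDF t) := by
    have := (integrable_mul_exp_neg_mul_sq (b := (1:ℝ)/2) (by norm_num)).const_mul
      (Real.sqrt (2 * Real.pi))⁻¹
    refine this.congr (Filter.Eventually.of_forall fun t => ?_)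
    unfold stdNormalPDF; ring_nf
  exact h.integrableOn

lemma pdf_tendsto_zero : Tendsto stdNormalPDF atTop (nhds 0) := by
  unfold stdNormalPDF
  rw [show (0:ℝ) = (Real.sqrt (2 * Real.pi))⁻¹ * 0 by ring]
  apply Tendsto.const_mul
  apply Real.tendsto_exp_atBot.comp
  have h1 : Tendsto (fun t : ℝ => -t ^ 2) atTop atBot :=
    tendsto_neg_atTop_atBot.comp (tendsto_pow_atTop two_ne_zero)
  exact h1.atBot_div_const (by norm_num)

lemma integral_Ioi_id_mul_pdf (x : ℝ) :
    ∫ t in Ioi x, t * stdNormalPDF t = stdNormalPDF x := by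
  have h := integral_Ioi_of_hasDerivAt_of_tendsto' (a := x)
    (f := fun t => -stdNormalPDF t) (f' := fun t => t * stdNormalPDF t) (m := 0)
    (fun t _ => by have := (hasDerivAt_pdf t).neg; simp only [neg_mul, neg_neg] at this; exact this)
    (integrableOn_id_mul_pdf x) (by simpa using pdf_tendsto_zero.neg)
  simpa using h

lemma continuous_pdf : Continuous stdNormalPDF := by
  unfold stdNormalPDF; fun_prop

lemma integrableOn_aux_mul_pdf {x : ℝ} (hx : 0 < x) :
    IntegrableOn (fun t => (1 - 3 * (t ^ 4)⁻¹) * stdNormalPDF t) (Ioi x) := by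
  have h3 : IntegrableOn (fun t : ℝ => 3 * (t ^ 4)⁻¹ * stdNormalPDF t) (Ioi x) := by
    refine Integrable.mono' ((integrable_pdf.const_mul (3 * (x ^ 4)⁻¹)).integrableOn) ?_ ?_
    · exact (((measurable_id.pow_const 4).inv.const_mul 3).mul
        continuous_pdf.measurable).aestronglyMeasurable
    · rw [ae_restrict_iff' measurableSet_Ioi]
      refine Filter.Eventually.of_forall fun t ht => ?_
      have htx : x ≤ t := le_of_lt ht
      have h4 : (0:ℝ) < x ^ 4 := by positivity
      have h5 : x ^ 4 ≤ t ^ 4 := pow_le_pow_left₀ hx.le htx 4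
      have h6 : (t ^ 4)⁻¹ ≤ (x ^ 4)⁻¹ := by
        apply inv_anti₀ h4 h5
      have hp := pdf_pos t
      rw [Real.norm_eq_abs, abs_of_nonneg (by positivity)]
      nlinarith
  have heq : (fun t : ℝ => (1 - 3 * (t ^ 4)⁻¹) * stdNormalPDF t)
      = fun t : ℝ => stdNormalPDF t - 3 * (t ^ 4)⁻¹ * stdNormalPDF t := by
    ext t; ring
  rw [heq]
  exact integrable_pdf.integrableOn.sub h3

lemma integral_Ioi_aux {x : ℝ} (hx : 0 < x) :
    ∫ t in Ioi x, (1 - 3 * (t ^ 4)⁻¹) * stdNormalPDF t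
      = (x⁻¹ - (x ^ 3)⁻¹) * stdNormalPDF x := by
  have h := integral_Ioi_of_hasDerivAt_of_tendsto' (a := x)
    (f := fun t => -((t⁻¹ - (t ^ 3)⁻¹) * stdNormalPDF t))
    (f' := fun t => (1 - 3 * (t ^ 4)⁻¹) * stdNormalPDF t) (m := 0)
    (fun t ht => ?_) (integrableOn_aux_mul_pdf hx) ?_
  · simpa using h
  · have ht0 : t ≠ 0 := by have := lt_of_lt_of_le hx ht; positivity
    have h1 : HasDerivAt (fun t : ℝ => t⁻¹ - (t ^ 3)⁻¹)
        (-(t ^ 2)⁻¹ - -(3 * t ^ 2) / (t ^ 3) ^ 2) t := by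
      refine (hasDerivAt_inv ht0).sub ?_
      have := (hasDerivAt_pow 3 t).inv (pow_ne_zero 3 ht0)
      exact this.congr_deriv (by norm_num)
    have h2 := (h1.mul (hasDerivAt_pdf t)).neg
    refine h2.congr_deriv ?_
    have hp := pdf_pos t
    field_simp
    ring
  · have h1 : Tendsto (fun t : ℝ => t⁻¹ - (t ^ 3)⁻¹) atTop (nhds 0) := by
      have ha : Tendsto (fun t : ℝ => t⁻¹) atTop (nhds 0) := tendsto_inv_atTop_zero
      have hb : Tendsto (fun t : ℝ => (t ^ 3)⁻¹) atTop (nhds 0) :=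
        tendsto_inv_atTop_zero.comp (tendsto_pow_atTop three_ne_zero)
      simpa using ha.sub hb
    have := (h1.mul pdf_tendsto_zero).neg
    simpa using this

lemma tail_upper {x : ℝ} (hx : 0 < x) :
    ∫ t in Ioi x, stdNormalPDF t ≤ stdNormalPDF x / x := by
  have h1 : ∫ t in Ioi x, stdNormalPDF t ≤ ∫ t in Ioi x, t * stdNormalPDF t / x := by
    refine setIntegral_mono_on integrable_pdf.integrableOn
      ((integrableOn_id_mul_pdf x).div_const x) measurableSet_Ioi fun t ht => ?_
    have htx : x < t := ht
    have hp := pdf_pos t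
    rw [le_div_iff₀ hx]
    nlinarith
  calc ∫ t in Ioi x, stdNormalPDF t ≤ ∫ t in Ioi x, t * stdNormalPDF t / x := h1
    _ = (∫ t in Ioi x, t * stdNormalPDF t) / x := integral_div _ _
    _ = stdNormalPDF x / x := by rw [integral_Ioi_id_mul_pdf]

lemma tail_lower {x : ℝ} (hx : 0 < x) :
    (1 - (x ^ 2)⁻¹) * (stdNormalPDF x / x) ≤ ∫ t in Ioi x, stdNormalPDF t := by
  have h1 : ∫ t in Ioi x, (1 - 3 * (t ^ 4)⁻¹) * stdNormalPDF t
      ≤ ∫ t in Ioi x, stdNormalPDF t := by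
    refine setIntegral_mono_on (integrableOn_aux_mul_pdf hx)
      integrable_pdf.integrableOn measurableSet_Ioi fun t ht => ?_
    have hp := pdf_pos t
    have ht0 : (0:ℝ) < t ^ 4 := by have := lt_trans hx ht; positivity
    nlinarith [inv_pos.mpr ht0]
  have h2 : (1 - (x ^ 2)⁻¹) * (stdNormalPDF x / x) = (x⁻¹ - (x ^ 3)⁻¹) * stdNormalPDF x := by
    field_simp
  rw [h2, ← integral_Ioi_aux hx]
  exact h1

lemma tendsto_log_nat : Tendsto (fun K : ℕ => Real.log K) atTop atTop :=
  Real.tendsto_log_atTop.comp tendsto_natCast_atTop_atTop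

lemma tendsto_loglog : Tendsto (fun K : ℕ => Real.log (Real.log K)) atTop atTop :=
  Real.tendsto_log_atTop.comp tendsto_log_nat

lemma tendsto_log_div_nat : Tendsto (fun K : ℕ => Real.log K / K) atTop (nhds 0) :=
  (Real.isLittleO_log_id_atTop.tendsto_div_nhds_zero).comp tendsto_natCast_atTop_atTop

lemma log_nat_gt {K : ℕ} (hK : 3 ≤ K) : 1 < Real.log K := by
  have h3 : (3:ℝ) ≤ (K:ℝ) := by exact_mod_cast hK
  have he : Real.exp 1 < (K:ℝ) :=
    lt_of_lt_of_le (lt_of_lt_of_le Real.exp_one_lt_d9 (by norm_num)) h3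
  exact (Real.lt_log_iff_exp_lt (by linarith)).mpr he

lemma log_two_log_le {K : ℕ} (hK : 3 ≤ K) :
    Real.log (2 * Real.log K) ≤ Real.log 2 + Real.log K := by
  have h1 := log_nat_gt hK
  rw [Real.log_mul two_ne_zero (by linarith)]
  have h2 : Real.log (Real.log K) ≤ Real.log K :=
    Real.log_le_self (by linarith)
  linarith

lemma log_two_log_pos {K : ℕ} (hK : 3 ≤ K) : 0 < Real.log (2 * Real.log K) := by
  have h1 := log_nat_gt hK
  have : (1:ℝ) < 2 * Real.log K := by linarith
  exact Real.log_pos this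

lemma eps_tendsto_zero :
    Tendsto (fun K : ℕ => Real.log (2 * Real.log K) / K) atTop (nhds 0) := by
  have hub : Tendsto (fun K : ℕ => (Real.log 2 + Real.log K) / K) atTop (nhds 0) := by
    have h1 : Tendsto (fun K : ℕ => Real.log 2 / K) atTop (nhds 0) :=
      Tendsto.div_atTop tendsto_const_nhds tendsto_natCast_atTop_atTop
    have := h1.add tendsto_log_div_nat
    simpa [add_div] using this
  refine tendsto_of_tendsto_of_tendsto_of_le_of_le' tendsto_const_nhds hub ?_ ?_
  · filter_upwards [eventually_ge_atTop 3] with K hK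
    have hKpos : (0:ℝ) < K := by positivity
    exact div_nonneg (log_two_log_pos hK).le hKpos.le
  · filter_upwards [eventually_ge_atTop 3] with K hK
    have hKpos : (0:ℝ) < K := by
      have : (3:ℝ) ≤ (K:ℝ) := by exact_mod_cast hK
      linarith
    exact div_le_div_of_nonneg_right (log_two_log_le hK) hKpos.le |>.trans_eq rfl

lemma tendsto_log2log_div_loglog :
    Tendsto (fun K : ℕ => Real.log (2 * Real.log K) / Real.log (Real.log K))
      atTop (nhds 1) := by
  have h1 : Tendsto (fun K : ℕ => Real.log 2 / Real.log (Real.log K) + 1) atTop (nhds 1) := by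
    have := Tendsto.div_atTop (f := fun K : ℕ => Real.log 2) tendsto_const_nhds tendsto_loglog
    simpa using this.add (tendsto_const_nhds (x := (1:ℝ)))
  refine h1.congr' ?_
  filter_upwards [eventually_ge_atTop 3, tendsto_loglog.eventually_gt_atTop 0]
    with K hK hll
  have h2 := log_nat_gt hK
  rw [Real.log_mul two_ne_zero (by linarith)]
  field_simp

lemma exp_slope_nhds : Tendsto (fun h : ℝ => (Real.exp h - 1) / h)
    (nhdsWithin 0 {0}ᶜ) (nhds 1) := by
  have h := hasDerivAt_iff_tendsto_slope.mp (Real.hasDerivAt_exp 0)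
  rw [Real.exp_zero] at h
  refine h.congr fun x => ?_
  simp [slope_def_field, div_eq_div_iff]

lemma exp_three_half_lt : Real.exp (3/2 : ℝ) < 5 := by
  have h3 : Real.exp (3:ℝ) < 25 := by
    have h := Real.exp_one_lt_d9
    have h1 : Real.exp (3:ℝ) = (Real.exp 1) ^ 3 := by
      rw [← Real.exp_nat_mul]; norm_num
    have h2 : (Real.exp 1) ^ 3 < 2.7182818286 ^ 3 :=
      pow_lt_pow_left₀ h (Real.exp_pos 1).le three_ne_zero
    rw [h1]
    calc (Real.exp 1) ^ 3 < 2.7182818286 ^ 3 := h2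
      _ < 25 := by norm_num
  have hx2 : Real.exp (3/2:ℝ) * Real.exp (3/2:ℝ) = Real.exp 3 := by
    rw [← Real.exp_add]; norm_num
  nlinarith [Real.exp_pos (3/2:ℝ)]

lemma one_le_log_two_log {K : ℕ} (hK : 5 ≤ K) : 1 ≤ Real.log (2 * Real.log K) := by
  have h5 : (5:ℝ) ≤ K := by exact_mod_cast hK
  have hlogK : (3/2:ℝ) < Real.log K :=
    (Real.lt_log_iff_exp_lt (by linarith)).mpr (lt_of_lt_of_le exp_three_half_lt h5)
  have he : Real.exp 1 ≤ 2 * Real.log K := by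
    have := Real.exp_one_lt_d9; linarith
  exact (Real.le_log_iff_exp_le (by linarith)).mpr he

theorem stmt_7 (ξ : ℕ → ℝ)
    (hξ : ∀ K : ℕ, 3 ≤ K → (stdNormalCDF (ξ K)) ^ K = (2 * Real.log K)⁻¹) :
    Tendsto (fun K : ℕ => ξ K / Real.sqrt (2 * Real.log K)) atTop (nhds 1) ∧
    Tendsto (fun K : ℕ => (K : ℝ) * stdNormalPDF (ξ K) / (ξ K * Real.log (Real.log K)))
      atTop (nhds 1) := by
  set ε : ℕ → ℝ := fun K => Real.log (2 * Real.log K) / K with hεdef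
  set u : ℕ → ℝ := fun K => 1 - stdNormalCDF (ξ K) with hudef
  -- eventual positivity of ε
  have hεpos : ∀ K : ℕ, 3 ≤ K → 0 < ε K := fun K hK =>
    div_pos (log_two_log_pos hK) (by positivity)
  -- Φ(ξ K) = exp (-(ε K))
  have hΦ_eq : ∀ K : ℕ, 3 ≤ K → stdNormalCDF (ξ K) = Real.exp (-(ε K)) := by
    intro K hK
    have hc : (0:ℝ) < (2 * Real.log K)⁻¹ := inv_pos.mpr (by
      have := log_nat_gt hK; linarith)
    have hΦnn : 0 ≤ stdNormalCDF (ξ K) := ENNReal.toReal_nonneg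
    have hΦpos : 0 < stdNormalCDF (ξ K) := by
      rcases hΦnn.lt_or_eq with h | h
      · exact h
      · exfalso
        have := hξ K hK
        rw [← h, zero_pow (by omega)] at this
        linarith
    have hlog : (K:ℝ) * Real.log (stdNormalCDF (ξ K)) = -Real.log (2 * Real.log K) := by
      have := congrArg Real.log (hξ K hK)
      rwa [Real.log_pow, Real.log_inv] at this
    have hK0 : (K:ℝ) ≠ 0 := by positivity
    have : Real.log (stdNormalCDF (ξ K)) = -(ε K) := by
      rw [hεdef]; field_simp at hlog ⊢; linarith
    rw [← Real.exp_log hΦpos, this]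
  -- Φ(ξ K) → 1
  have hΦ_tendsto : Tendsto (fun K => stdNormalCDF (ξ K)) atTop (nhds 1) := by
    have h1 : Tendsto (fun K => Real.exp (-(ε K))) atTop (nhds 1) := by
      have h0 : Tendsto (fun K : ℕ => -(ε K)) atTop (nhds 0) := by
        simpa using eps_tendsto_zero.neg
      have h1 := (Real.continuous_exp.continuousAt (x := (0:ℝ))).tendsto.comp h0
      simpa [Function.comp_def] using h1
    refine h1.congr' ?_
    filter_upwards [eventually_ge_atTop 3] with K hK
    exact (hΦ_eq K hK).symm
  -- Φ x < 1 for all x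
  have hcdf_le_one : ∀ x : ℝ, stdNormalCDF x ≤ 1 := by
    intro x
    rw [stdNormalCDF]
    exact ENNReal.toReal_le_of_le_ofReal one_pos.le (by simpa using prob_le_one)
  have hcdf_lt_one : ∀ x : ℝ, stdNormalCDF x < 1 :=
    fun x => lt_of_lt_of_le (cdf_strictMono (lt_add_one x)) (hcdf_le_one (x + 1))
  -- ξ → ∞
  have hξ_top : Tendsto ξ atTop atTop := by
    rw [tendsto_atTop]
    intro M
    have h1 : ∀ᶠ K in atTop, stdNormalCDF M < stdNormalCDF (ξ K) :=
      hΦ_tendsto.eventually (eventually_gt_nhds (hcdf_lt_one M))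
    filter_upwards [h1] with K hK
    exact (cdf_strictMono.lt_iff_lt.mp hK).le
  -- u → 0 and u/ε → 1
  have hu_pos : ∀ K : ℕ, 3 ≤ K → 0 < u K := by
    intro K hK
    have := hcdf_lt_one (ξ K)
    simp only [hudef]; linarith
  have hue : Tendsto (fun K => u K / ε K) atTop (nhds 1) := by
    have hcomp : Tendsto (fun K : ℕ => -(ε K)) atTop (nhdsWithin 0 {0}ᶜ) := by
      rw [tendsto_nhdsWithin_iff]
      constructor
      · simpa using eps_tendsto_zero.neg
      · filter_upwards [eventually_ge_atTop 3] with K hK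
        simp only [Set.mem_compl_iff, Set.mem_singleton_iff]
        have := hεpos K hK; intro h; rw [neg_eq_zero] at h; linarith
    have h2 := exp_slope_nhds.comp hcomp
    refine h2.congr' ?_
    filter_upwards [eventually_ge_atTop 3] with K hK
    have hε0 : ε K ≠ 0 := (hεpos K hK).ne'
    simp only [Function.comp_apply, hudef, hΦ_eq K hK]
    rw [div_neg, ← neg_div, neg_sub]
  -- K * u / log (2 log K) → 1
  have hKu : Tendsto (fun K : ℕ => (K:ℝ) * u K / Real.log (2 * Real.log K))
      atTop (nhds 1) := by
    refine hue.congr' ?_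
    filter_upwards [eventually_ge_atTop 3] with K hK
    have hL2 : Real.log (2 * Real.log K) ≠ 0 := (log_two_log_pos hK).ne'
    have hK0 : (K:ℝ) ≠ 0 := by positivity
    rw [hεdef]
    field_simp
  -- tail ratio → 1
  have hρ : Tendsto (fun K => u K / (stdNormalPDF (ξ K) / ξ K)) atTop (nhds 1) := by
    have hlow : Tendsto (fun K => 1 - ((ξ K) ^ 2)⁻¹) atTop (nhds 1) := by
      have h1 : Tendsto (fun K => ((ξ K) ^ 2)⁻¹) atTop (nhds 0) :=
        tendsto_inv_atTop_zero.comp ((tendsto_pow_atTop two_ne_zero).comp hξ_top)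
      simpa using (tendsto_const_nhds (x := (1:ℝ))).sub h1
    refine tendsto_of_tendsto_of_tendsto_of_le_of_le' hlow tendsto_const_nhds ?_ ?_
    · filter_upwards [hξ_top.eventually_gt_atTop 0] with K hK
      have hpos : 0 < stdNormalPDF (ξ K) / ξ K := div_pos (pdf_pos _) hK
      have h1 := tail_lower hK
      rw [← tail_eq] at h1
      rw [le_div_iff₀ hpos]
      exact h1
    · filter_upwards [hξ_top.eventually_gt_atTop 0] with K hK
      have hpos : 0 < stdNormalPDF (ξ K) / ξ K := div_pos (pdf_pos _) hK
      have h1 := tail_upper hK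
      rw [← tail_eq] at h1
      rw [div_le_one hpos]
      exact h1
  have hρinv : Tendsto (fun K => (stdNormalPDF (ξ K) / ξ K) / u K) atTop (nhds 1) := by
    have := hρ.inv₀ one_ne_zero
    rw [inv_one] at this
    refine this.congr' ?_
    filter_upwards [hξ_top.eventually_gt_atTop 0, eventually_ge_atTop 3] with K h0 h3
    rw [inv_div]
  -- Part (ii)
  have hpart2 : Tendsto (fun K : ℕ => (K : ℝ) * stdNormalPDF (ξ K)
      / (ξ K * Real.log (Real.log K))) atTop (nhds 1) := by
    have hprod := (hρinv.mul hKu).mul tendsto_log2log_div_loglog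
    rw [show ((1:ℝ)*1)*1 = 1 by norm_num] at hprod
    refine hprod.congr' ?_
    filter_upwards [eventually_ge_atTop 3, hξ_top.eventually_gt_atTop 0,
      tendsto_loglog.eventually_gt_atTop 0] with K h3 hξ0 hll
    have hu0 := hu_pos K h3
    have hL2 := log_two_log_pos h3
    have hK0 : (0:ℝ) < K := by positivity
    field_simp
  -- Part (i)
  have hs : Tendsto (fun K => stdNormalPDF (ξ K) / (ξ K * ε K)) atTop (nhds 1) := by
    have h := hρinv.mul hue
    rw [mul_one] at h
    refine h.congr' ?_
    filter_upwards [eventually_ge_atTop 3, hξ_top.eventually_gt_atTop 0] with K h3 hξ0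
    have hu0 := (hu_pos K h3).ne'
    have hε0 := (hεpos K h3).ne'
    field_simp
  have hδt : Tendsto (fun K => Real.log (stdNormalPDF (ξ K) / (ξ K * ε K)))
      atTop (nhds 0) := by
    have := (Real.continuousAt_log one_ne_zero).tendsto.comp hs
    simpa [Function.comp_def] using this
  set δ : ℕ → ℝ := fun K => Real.log (stdNormalPDF (ξ K) / (ξ K * ε K)) with hδdef
  set c : ℕ → ℝ := fun K => Real.log (Real.log (2 * Real.log K))
    + Real.log (Real.sqrt (2 * Real.pi)) + δ K with hcdef
  have hE : ∀ᶠ K : ℕ in atTop,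
      ξ K ^ 2 / 2 = Real.log K - c K - Real.log (ξ K) := by
    filter_upwards [eventually_ge_atTop 3, hξ_top.eventually_gt_atTop 0] with K h3 hξ0
    have hε0 := hεpos K h3
    have hK0 : (0:ℝ) < K := by positivity
    have hL2 := log_two_log_pos h3
    have hlogp : Real.log (stdNormalPDF (ξ K))
        = -Real.log (Real.sqrt (2 * Real.pi)) - ξ K ^ 2 / 2 := by
      rw [stdNormalPDF, Real.log_mul (inv_ne_zero (by positivity)) (Real.exp_ne_zero _),
        Real.log_inv, Real.log_exp]
      ring
    have hlogε : Real.log (ε K)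
        = Real.log (Real.log (2 * Real.log K)) - Real.log K :=
      Real.log_div hL2.ne' hK0.ne'
    have hδeq : δ K = Real.log (stdNormalPDF (ξ K)) - Real.log (ξ K) - Real.log (ε K) := by
      show Real.log (stdNormalPDF (ξ K) / (ξ K * ε K)) = _
      rw [Real.log_div (pdf_pos _).ne' (by positivity),
        Real.log_mul hξ0.ne' hε0.ne']
      ring
    have hkey : δ K = -Real.log (Real.sqrt (2 * Real.pi)) - ξ K ^ 2 / 2
        - Real.log (ξ K) - (Real.log (Real.log (2 * Real.log K)) - Real.log K) := by
      rw [hδeq, hlogp, hlogε]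
    simp only [hcdef]
    linarith
  -- c K / log K → 0
  have h3log : Tendsto (fun K : ℕ => Real.log (Real.log (2 * Real.log K)) / Real.log K)
      atTop (nhds 0) := by
    have hub : Tendsto (fun K : ℕ => (Real.log 2 + Real.log (Real.log K)) / Real.log K)
        atTop (nhds 0) := by
      have h1 : Tendsto (fun K : ℕ => Real.log 2 / Real.log K) atTop (nhds 0) :=
        Tendsto.div_atTop tendsto_const_nhds tendsto_log_nat
      have h2 : Tendsto (fun K : ℕ => Real.log (Real.log K) / Real.log K) atTop (nhds 0) :=
        Real.isLittleO_log_id_atTop.tendsto_div_nhds_zero.comp tendsto_log_nat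
      simpa [add_div] using h1.add h2
    refine tendsto_of_tendsto_of_tendsto_of_le_of_le' tendsto_const_nhds hub ?_ ?_
    · filter_upwards [eventually_ge_atTop 5] with K hK
      have h1 := one_le_log_two_log hK
      have hlK : (0:ℝ) < Real.log K := by
        have := log_nat_gt (by omega : 3 ≤ K); linarith
      exact div_nonneg (Real.log_nonneg h1) hlK.le
    · filter_upwards [eventually_ge_atTop 5] with K hK
      have h1 := one_le_log_two_log hK
      have hlogK := log_nat_gt (by omega : 3 ≤ K)
      have hlK : (0:ℝ) < Real.log K := by linarith
      refine div_le_div_of_nonneg_right ?_ hlK.le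
      calc Real.log (Real.log (2 * Real.log K)) ≤ Real.log (2 * Real.log K) :=
            Real.log_le_self (by linarith)
        _ = Real.log 2 + Real.log (Real.log K) :=
            Real.log_mul two_ne_zero (by linarith)
  have hc : Tendsto (fun K => c K / Real.log K) atTop (nhds 0) := by
    have h1 : Tendsto (fun K : ℕ => Real.log (Real.sqrt (2 * Real.pi)) / Real.log K)
        atTop (nhds 0) := Tendsto.div_atTop tendsto_const_nhds tendsto_log_nat
    have h2 : Tendsto (fun K : ℕ => δ K / Real.log K) atTop (nhds 0) :=
      Tendsto.div_atTop hδt tendsto_log_nat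
    have := (h3log.add h1).add h2
    simp only [hcdef]
    simpa [add_div] using this
  have hξ1 : ∀ᶠ K : ℕ in atTop, 1 ≤ ξ K := hξ_top.eventually_ge_atTop 1
  have hA_eq : ∀ᶠ K : ℕ in atTop, ξ K ^ 2 / (2 * Real.log K)
      = 1 - c K / Real.log K - Real.log (ξ K) / Real.log K := by
    filter_upwards [hE, eventually_ge_atTop 3] with K hEK h3
    have hlK : (0:ℝ) < Real.log K := by have := log_nat_gt h3; linarith
    have h2 : ξ K ^ 2 = 2 * (Real.log K - c K - Real.log (ξ K)) := by
      linear_combination 2 * hEK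
    rw [h2]; field_simp
  have hA_ub : ∀ᶠ K : ℕ in atTop, ξ K ^ 2 / (2 * Real.log K) ≤ 2 := by
    filter_upwards [hA_eq, hξ1, eventually_ge_atTop 3,
      hc.eventually_const_lt (by norm_num : (-1:ℝ) < 0)] with K hA h1 h3 hclt
    have hlK : (0:ℝ) < Real.log K := by have := log_nat_gt h3; linarith
    have hlξ : 0 ≤ Real.log (ξ K) := Real.log_nonneg h1
    have : 0 ≤ Real.log (ξ K) / Real.log K := div_nonneg hlξ hlK.le
    linarith
  have hξ_le : ∀ᶠ K : ℕ in atTop,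
      Real.log (ξ K) ≤ Real.log 2 + (1/2) * Real.log (Real.log K) := by
    filter_upwards [hA_ub, hξ1, eventually_ge_atTop 3] with K hA h1 h3
    have hlK : (0:ℝ) < Real.log K := by have := log_nat_gt h3; linarith
    have hξ2 : ξ K ^ 2 ≤ 4 * Real.log K := by
      have h2lK : (0:ℝ) < 2 * Real.log K := by linarith
      have := (div_le_iff₀ h2lK).mp hA
      linarith
    have hs0 : 0 ≤ Real.sqrt (Real.log K) := Real.sqrt_nonneg _
    have h4 : (2 * Real.sqrt (Real.log K)) ^ 2 = 4 * Real.log K := by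
      rw [mul_pow, Real.sq_sqrt hlK.le]; ring
    have hξle : ξ K ≤ 2 * Real.sqrt (Real.log K) := by
      nlinarith
    calc Real.log (ξ K) ≤ Real.log (2 * Real.sqrt (Real.log K)) :=
          Real.log_le_log (by linarith) hξle
      _ = Real.log 2 + (1/2) * Real.log (Real.log K) := by
          rw [Real.log_mul two_ne_zero (Real.sqrt_ne_zero'.mpr hlK),
            Real.log_sqrt hlK.le]
          ring
  have hBlog : Tendsto (fun K => Real.log (ξ K) / Real.log K) atTop (nhds 0) := by
    have hub : Tendsto (fun K : ℕ =>
        (Real.log 2 + (1/2) * Real.log (Real.log K)) / Real.log K) atTop (nhds 0) := by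
      have h1 : Tendsto (fun K : ℕ => Real.log 2 / Real.log K) atTop (nhds 0) :=
        Tendsto.div_atTop tendsto_const_nhds tendsto_log_nat
      have h2 : Tendsto (fun K : ℕ => Real.log (Real.log K) / Real.log K) atTop (nhds 0) :=
        Real.isLittleO_log_id_atTop.tendsto_div_nhds_zero.comp tendsto_log_nat
      have h3 := h2.const_mul (1/2 : ℝ)
      have := h1.add h3
      simp only [mul_zero, add_zero, zero_add] at this ⊢
      refine this.congr fun K => ?_
      field_simp
    refine tendsto_of_tendsto_of_tendsto_of_le_of_le' tendsto_const_nhds hub ?_ ?_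
    · filter_upwards [hξ1, eventually_ge_atTop 3] with K h1 h3
      have hlK : (0:ℝ) < Real.log K := by have := log_nat_gt h3; linarith
      exact div_nonneg (Real.log_nonneg h1) hlK.le
    · filter_upwards [hξ_le, eventually_ge_atTop 3] with K hle h3
      have hlK : (0:ℝ) < Real.log K := by have := log_nat_gt h3; linarith
      exact div_le_div_of_nonneg_right hle hlK.le
  have hA : Tendsto (fun K => ξ K ^ 2 / (2 * Real.log K)) atTop (nhds 1) := by
    have h1 : Tendsto (fun K : ℕ => 1 - c K / Real.log K - Real.log (ξ K) / Real.log K)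
        atTop (nhds 1) := by
      have := ((tendsto_const_nhds (x := (1:ℝ))).sub hc).sub hBlog
      simpa using this
    exact h1.congr' (hA_eq.mono fun K h => h.symm)
  have hpart1 : Tendsto (fun K : ℕ => ξ K / Real.sqrt (2 * Real.log K)) atTop (nhds 1) := by
    have hsq := hA.sqrt
    rw [Real.sqrt_one] at hsq
    refine hsq.congr' ?_
    filter_upwards [hξ1, eventually_ge_atTop 3] with K h1 h3
    have hlK : (0:ℝ) < Real.log K := by have := log_nat_gt h3; linarith
    rw [Real.sqrt_div (sq_nonneg _), Real.sqrt_sq (by linarith : (0:ℝ) ≤ ξ K)]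
  exact ⟨hpart1, hpart2⟩
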